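/- Let p be an odd prime and G a finite abelian noncyclic group of order p^n. Then the number of maximal cyclic subgroups of G is at least ((p+1)/2)·n. -/

import Mathlib

open Subgroup

def IsMaximalCyclic {G : Type*} [Group G] (H : Subgroup G) : Prop :=
  IsCyclic H ∧ ∀ K : Subgroup G, IsCyclic K → H ≤ K → H = K

section NatLemmas

private lemma geom_lb {p d : ℕ} (hp : 2 ≤ p) (hd : 2 ≤ d) :
    (p + 1) * d ≤ 2 * ∑ i ∈ Finset.range d, p ^ i := by
  induction d, hd using Nat.le_induction with
  | base =>
      rw [Finset.sum_range_succ, Finset.sum_range_succ, Finset.sum_range_zero]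
      simp only [pow_zero, pow_one]
      omega
  | succ d hd ih =>
      rw [Finset.sum_range_succ, Nat.mul_add]
      have h1 : p ≤ p ^ d := Nat.le_self_pow (by omega) p
      omega

private lemma pow_lb {p a : ℕ} (hp : 3 ≤ p) (ha : 1 ≤ a) :
    (p + 1) * a + 2 ≤ 2 * p ^ a := by
  induction a, ha using Nat.le_induction with
  | base => rw [pow_one]; omega
  | succ a ha ih =>
      have h1 : p ≤ p ^ a := Nat.le_self_pow (by omega) p
      have h2 : p ^ (a + 1) = p ^ a * p := pow_succ p a
      have h3 : p ^ a * 3 ≤ p ^ a * p := Nat.mul_le_mul_left _ hp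
      nlinarith

private lemma step_lb (S : ℕ → ℕ) (hconc : ∀ k, S (k+2) + S k ≤ 2 * S (k+1)) :
    ∀ k, 1 ≤ k → S k < S (k+1) → S 1 + k ≤ S k + 1 := by
  intro k
  induction k with
  | zero => omega
  | succ k ih =>
      intro _ hlt
      have hlt' : S (k+1) < S (k+2) := hlt
      rcases Nat.eq_zero_or_pos k with rfl | hk
      · have e : S (0+1) = S 1 := by norm_num
        omega
      · have hk1 : S k < S (k+1) := by
          by_contra h
          have := hconc k
          omega
        have h2 := ih hk hk1
        omega

private lemma arith {p n : ℕ} (hp3 : 3 ≤ p) (hn : 1 ≤ n) (S : ℕ → ℕ) (x r : ℕ → ℕ)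
    (hS0 : S 0 = 0) (hS1 : 2 ≤ S 1) (hSn : S n = n) (hSn1 : S (n+1) = n)
    (hmono : ∀ k, S k ≤ S (k+1))
    (hconc : ∀ k, S (k+2) + S k ≤ 2 * S (k+1))
    (hr : ∀ k, p ^ (S (k+1)) = p ^ (S 1) * r k)
    (hx : ∀ k, x k + r (k+1) + p ^ (S k) = p ^ (S (k+1)) + r k) :
    ((p : ℝ) + 1) / 2 * n ≤ ∑ k ∈ Finset.range n, (x k : ℝ) / ((p:ℝ) ^ k * ((p:ℝ) - 1)) := by
  set P : ℝ := (p : ℝ) with hPdef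
  have hP1 : (1:ℝ) < P := by
    rw [hPdef]; exact_mod_cast by omega
  have hP0 : (0:ℝ) < P := lt_trans one_pos hP1
  have hPm1 : (0:ℝ) < P - 1 := by linarith
  set d : ℕ := S 1 with hd
  have hrR : ∀ k, (r k : ℝ) = P ^ (S (k+1)) / P ^ d := by
    intro k
    have h : (P ^ (S (k+1))) = P ^ d * (r k : ℝ) := by
      rw [hPdef]
      exact_mod_cast congrArg (Nat.cast : ℕ → ℝ) (hr k)
    field_simp
    linarith [h]
  have hxR : ∀ k, (x k : ℝ) = P ^ (S (k+1)) - P ^ (S k) - P ^ (S (k+2)) / P ^ d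
      + P ^ (S (k+1)) / P ^ d := by
    intro k
    have h := hx k
    have h' : (x k : ℝ) + (r (k+1) : ℝ) + P ^ (S k) = P ^ (S (k+1)) + (r k : ℝ) := by
      rw [hPdef]
      exact_mod_cast congrArg (Nat.cast : ℕ → ℝ) h
    rw [hrR k, hrR (k+1)] at h'
    linarith
  set Gk : ℕ → ℝ := fun k => (P ^ (S (k+1)) - P ^ (S k)) * P / (P ^ d * P ^ k * (P - 1))
    with hGk
  set c : ℝ := P ^ d / P with hc
  have hterm : ∀ k, (x k : ℝ) / (P ^ k * (P - 1)) = c * Gk k - Gk (k+1) := by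
    intro k
    rw [hxR k, hGk, hc]
    have hPk : (P:ℝ) ^ k ≠ 0 := (pow_pos hP0 k).ne'
    have hPd : (P:ℝ) ^ d ≠ 0 := (pow_pos hP0 d).ne'
    have hPne : (P:ℝ) ≠ 0 := hP0.ne'
    have hPm1ne : (P:ℝ) - 1 ≠ 0 := hPm1.ne'
    simp only []
    rw [pow_succ]
    field_simp
    ring
  have hGn : Gk n = 0 := by
    rw [hGk]
    simp only []
    rw [hSn1, hSn]
    simp
  have hsum : ∑ k ∈ Finset.range n, (x k : ℝ) / (P ^ k * (P - 1))
      = (∑ k ∈ Finset.range n, (c - 1) * Gk k) + (Gk 0 - Gk n) := by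
    rw [← Finset.sum_range_sub' Gk n, ← Finset.sum_add_distrib]
    apply Finset.sum_congr rfl
    intro k _
    rw [hterm k]
    ring
  rw [hsum, hGn, sub_zero]
  have hsplit : (∑ k ∈ Finset.range n, (c - 1) * Gk k)
      = (c - 1) * Gk 0 + ∑ k ∈ Finset.Ico 1 n, (c - 1) * Gk k := by
    rw [Finset.range_eq_Ico, Finset.sum_eq_sum_Ico_succ_bot hn]
  rw [hsplit]
  have hG0 : c * Gk 0 = (P ^ d - 1) / (P - 1) := by
    rw [hGk, hc]
    simp only []
    rw [hS0]
    have hPd : (P:ℝ) ^ d ≠ 0 := (pow_pos hP0 d).ne'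
    field_simp
    ring
  have hcastN : ((p:ℝ) + 1) * (d:ℝ) ≤ 2 * ∑ i ∈ Finset.range d, (p:ℝ) ^ i := by
    exact_mod_cast geom_lb (show 2 ≤ p by omega) hS1
  have hb1 : (P + 1) / 2 * d ≤ c * Gk 0 := by
    rw [hG0]
    have hgeom : (P - 1) * ∑ i ∈ Finset.range d, P ^ i = P ^ d - 1 := by
      have := geom_sum_mul (x := P) (n := d)
      linarith
    have heq : (P ^ d - 1) / (P - 1) = ∑ i ∈ Finset.range d, P ^ i := by
      rw [← hgeom, mul_comm, mul_div_assoc, div_self hPm1.ne', mul_one]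
    rw [heq, hPdef]
    linarith [hcastN]
  have hmid : ∀ k ∈ Finset.Ico 1 n,
      (P + 1) / 2 * ((S (k+1) : ℝ) - (S k : ℝ)) ≤ (c - 1) * Gk k := by
    intro k hk
    rw [Finset.mem_Ico] at hk
    rcases Nat.lt_or_ge (S k) (S (k+1)) with hlt | hge
    · set a : ℕ := S (k+1) - S k with ha
      have ha1 : 1 ≤ a := by omega
      have haS : S (k+1) = S k + a := by omega
      have key : d + k ≤ S k + 1 := by
        have := step_lb S hconc k hk.1 hlt
        omega
      have hnneg : (0:ℝ) ≤ (P ^ a - 1) / (P - 1) := by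
        apply div_nonneg _ hPm1.le
        have : (1:ℝ) ≤ P ^ a := one_le_pow₀ hP1.le
        linarith
      have e : Gk k = (P ^ a - 1) / (P - 1) * (P ^ (S k + 1) / P ^ (d + k)) := by
        rw [hGk]
        simp only []
        rw [haS, pow_add, pow_add, pow_add]
        have h1 : (P:ℝ) ^ k ≠ 0 := (pow_pos hP0 k).ne'
        have h2 : (P:ℝ) ^ d ≠ 0 := (pow_pos hP0 d).ne'
        have h3 : (P:ℝ) ^ S k ≠ 0 := (pow_pos hP0 _).ne'
        field_simp
      have hfac : (1:ℝ) ≤ P ^ (S k + 1) / P ^ (d + k) := by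
        rw [one_le_div (pow_pos hP0 _)]
        exact pow_le_pow_right₀ hP1.le key
      have h2 : (P ^ a - 1) / (P - 1) ≤ Gk k := by
        rw [e]
        exact le_mul_of_one_le_right hnneg hfac
      have hGpos : (0:ℝ) ≤ Gk k := le_trans hnneg h2
      have h1 : P - 1 ≤ c - 1 := by
        have hPP : P ^ 2 ≤ P ^ d := pow_le_pow_right₀ hP1.le hS1
        have : P ≤ c := by
          rw [hc]
          rw [le_div_iff₀ hP0]
          calc P * P = P ^ 2 := by ring
            _ ≤ P ^ d := hPP
        linarith
      have h3 : (P + 1) / 2 * (a:ℝ) ≤ P ^ a - 1 := by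
        have hcast : ((p:ℝ) + 1) * (a:ℝ) + 2 ≤ 2 * (p:ℝ) ^ a := by
          exact_mod_cast pow_lb hp3 ha1
        rw [hPdef]
        linarith
      have hdelta : (S (k+1) : ℝ) - (S k : ℝ) = (a : ℝ) := by
        rw [haS]
        push_cast
        ring
      rw [hdelta]
      calc (P + 1) / 2 * (a:ℝ) ≤ P ^ a - 1 := h3
        _ = (P - 1) * ((P ^ a - 1) / (P - 1)) := by
            field_simp
        _ ≤ (c - 1) * Gk k := by
            apply mul_le_mul h1 h2 hnneg
            linarith
    · have heq : S (k+1) = S k := le_antisymm hge (hmono k)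
      have hGz : Gk k = 0 := by
        rw [hGk]
        simp only []
        rw [heq, sub_self, zero_mul, zero_div]
      rw [hGz, heq, sub_self, mul_zero, mul_zero]
  have t1 : ∑ k ∈ Finset.range n, ((S (k+1) : ℝ) - (S k : ℝ)) = (S n : ℝ) - (S 0 : ℝ) :=
    Finset.sum_range_sub (fun k => (S k : ℝ)) n
  have t2 : ∑ k ∈ Finset.range n, ((S (k+1) : ℝ) - (S k : ℝ))
      = ((S (0+1) : ℝ) - (S 0 : ℝ)) + ∑ k ∈ Finset.Ico 1 n, ((S (k+1) : ℝ) - (S k : ℝ)) := by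
    rw [Finset.range_eq_Ico, Finset.sum_eq_sum_Ico_succ_bot hn]
  have hteles : ∑ k ∈ Finset.Ico 1 n, ((S (k+1) : ℝ) - (S k : ℝ)) = (n : ℝ) - (d : ℝ) := by
    have e01 : S (0+1) = S 1 := by norm_num
    rw [e01] at t2
    rw [hSn] at t1
    rw [hd]
    linarith
  have hrest : (P + 1) / 2 * ((n:ℝ) - (d:ℝ)) ≤ ∑ k ∈ Finset.Ico 1 n, (c - 1) * Gk k := by
    calc (P + 1) / 2 * ((n:ℝ) - (d:ℝ))
        = ∑ k ∈ Finset.Ico 1 n, (P + 1) / 2 * ((S (k+1) : ℝ) - (S k : ℝ)) := by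
          rw [← Finset.mul_sum, hteles]
      _ ≤ ∑ k ∈ Finset.Ico 1 n, (c - 1) * Gk k := Finset.sum_le_sum hmid
  calc (P + 1) / 2 * (n:ℝ)
      = (P + 1) / 2 * (d:ℝ) + (P + 1) / 2 * ((n:ℝ) - (d:ℝ)) := by ring
    _ ≤ c * Gk 0 + ∑ k ∈ Finset.Ico 1 n, (c - 1) * Gk k := add_le_add hb1 hrest
    _ = ((c - 1) * Gk 0 + ∑ k ∈ Finset.Ico 1 n, (c - 1) * Gk k) + Gk 0 := by ring

end NatLemmas

section GroupLemmas

variable {G : Type*} [CommGroup G] [Finite G]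

private def Om (G : Type*) [CommGroup G] (p k : ℕ) : Subgroup G :=
  (powMonoidHom (p ^ k) : G →* G).ker

private lemma mem_Om {p k : ℕ} {x : G} : x ∈ Om G p k ↔ x ^ p ^ k = 1 := Iff.rfl

private lemma Om_le_succ (p k : ℕ) : Om G p k ≤ Om G p (k + 1) := by
  intro x hx
  rw [mem_Om] at hx ⊢
  rw [pow_succ, pow_mul, hx, one_pow]

private lemma Om_zero (p : ℕ) : Om G p 0 = ⊥ := by
  ext x; simp [mem_Om, Subgroup.mem_bot]

private lemma Om_top {p n : ℕ} (hG : Nat.card G = p ^ n) : Om G p n = ⊤ := by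
  rw [Subgroup.eq_top_iff']
  intro x
  rw [mem_Om, ← hG]
  exact pow_card_eq_one'

private lemma card_ker_mul_card_range {G H : Type*} [Group G] [Group H] (f : G →* H) :
    Nat.card f.ker * Nat.card f.range = Nat.card G := by
  rw [Subgroup.card_eq_card_quotient_mul_card_subgroup f.ker,
    Nat.card_congr (QuotientGroup.quotientKerEquivRange f).toEquiv, mul_comm]

private lemma card_subgroupOf_of_le {H K : Subgroup G} (h : H ≤ K) :
    Nat.card (H.subgroupOf K) = Nat.card H :=
  Nat.card_congr (Subgroup.subgroupOfEquivOfLe h).toEquiv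

private lemma Om_mono (p : ℕ) {k l : ℕ} (h : k ≤ l) : Om G p k ≤ Om G p l := by
  induction l with
  | zero => simp [Nat.le_zero.mp h, le_refl]
  | succ l ih =>
      rcases Nat.lt_or_ge k (l+1) with h' | h'
      · exact le_trans (ih (Nat.lt_succ_iff.mp h')) (Om_le_succ p l)
      · have : k = l + 1 := le_antisymm h h'
        simp [this, le_refl]

private lemma card_Om_succ (p k : ℕ) :
    Nat.card (Om G p (k + 1)) =
      Nat.card (Om G p 1) * Nat.card ((Om G p k) ⊓ (powMonoidHom p : G →* G).range : Subgroup G) := by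
  set f : Om G p (k+1) →* G := (powMonoidHom p : G →* G).comp (Om G p (k+1)).subtype with hf
  have hker : f.ker = (Om G p 1).subgroupOf (Om G p (k+1)) := by
    ext x
    simp [hf, MonoidHom.mem_ker, Subgroup.mem_subgroupOf, mem_Om, powMonoidHom_apply, pow_one]
  have hrange : f.range = (Om G p k) ⊓ (powMonoidHom p : G →* G).range := by
    ext y
    constructor
    · rintro ⟨x, rfl⟩
      refine ⟨?_, ⟨(x : G), rfl⟩⟩
      have hx := x.2
      rw [mem_Om] at hx
      show f x ∈ Om G p k
      rw [mem_Om]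
      simp only [hf, MonoidHom.comp_apply, powMonoidHom_apply, Subgroup.coe_subtype]
      rw [← pow_mul, ← pow_succ']
      exact hx
    · rintro ⟨hy, ⟨x, rfl⟩⟩
      have hy' : (x ^ p) ^ p ^ k = 1 := by
        have : powMonoidHom p x ∈ Om G p k := hy
        rw [mem_Om] at this
        simpa [powMonoidHom_apply] using this
      have hx : x ∈ Om G p (k+1) := by
        rw [mem_Om, pow_succ', pow_mul]
        exact hy'
      exact ⟨⟨x, hx⟩, rfl⟩
  have := card_ker_mul_card_range f
  rw [hker, hrange, card_subgroupOf_of_le (Om_mono p (by omega))] at this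
  exact this.symm

private lemma card_Om_concave (p k : ℕ) :
    Nat.card (Om G p (k + 2)) * Nat.card (Om G p k) ≤ Nat.card (Om G p (k + 1)) ^ 2 := by
  set π := QuotientGroup.mk' (Om G p k) with hπ
  have h1 : Nat.card (Om G p (k + 1)) =
      Nat.card (Om G p k) * Nat.card ((Om G p (k+1)).map π) := by
    set f : Om G p (k+1) →* G ⧸ (Om G p k) := π.comp (Om G p (k+1)).subtype with hfdef
    have hker : f.ker = (Om G p k).subgroupOf (Om G p (k+1)) := by
      ext x
      simp only [hfdef, MonoidHom.mem_ker, MonoidHom.comp_apply, Subgroup.coe_subtype,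
        Subgroup.mem_subgroupOf, hπ, QuotientGroup.mk'_apply, QuotientGroup.eq_one_iff]
    have hrange : f.range = (Om G p (k+1)).map π := by
      ext y
      constructor
      · rintro ⟨x, rfl⟩
        exact ⟨(x : G), x.2, rfl⟩
      · rintro ⟨x, hx, rfl⟩
        exact ⟨⟨x, hx⟩, rfl⟩
    have := card_ker_mul_card_range f
    rw [hker, hrange, card_subgroupOf_of_le (Om_le_succ p k)] at this
    exact this.symm
  have h2 : Nat.card (Om G p (k + 2)) ≤
      Nat.card (Om G p (k+1)) * Nat.card ((Om G p (k+1)).map π) := by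
    set g : Om G p (k+2) →* G ⧸ (Om G p k) :=
      π.comp ((powMonoidHom p : G →* G).comp (Om G p (k+2)).subtype) with hgdef
    have hker : g.ker = (Om G p (k+1)).subgroupOf (Om G p (k+2)) := by
      ext x
      simp only [hgdef, MonoidHom.mem_ker, MonoidHom.comp_apply, Subgroup.coe_subtype,
        powMonoidHom_apply, Subgroup.mem_subgroupOf, hπ, QuotientGroup.mk'_apply,
        QuotientGroup.eq_one_iff]
      rw [mem_Om, mem_Om, pow_succ', pow_mul]
    have hrange : g.range ≤ (Om G p (k+1)).map π := by
      rintro y ⟨x, rfl⟩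
      refine ⟨(x : G) ^ p, ?_, rfl⟩
      have hx : (x : G) ^ p ^ (k+2) = 1 := x.2
      show (x : G) ^ p ∈ Om G p (k+1)
      rw [mem_Om, ← pow_mul, ← pow_succ']
      exact hx
    have := card_ker_mul_card_range g
    rw [hker, card_subgroupOf_of_le (Om_le_succ p (k+1))] at this
    calc Nat.card (Om G p (k+2)) = Nat.card (Om G p (k+1)) * Nat.card g.range := this.symm
      _ ≤ Nat.card (Om G p (k+1)) * Nat.card ((Om G p (k+1)).map π) :=
          Nat.mul_le_mul_left _ (Subgroup.card_le_of_le hrange)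
  calc Nat.card (Om G p (k + 2)) * Nat.card (Om G p k)
      ≤ (Nat.card (Om G p (k+1)) * Nat.card ((Om G p (k+1)).map π)) * Nat.card (Om G p k) :=
        Nat.mul_le_mul_right _ h2
    _ = Nat.card (Om G p (k+1)) * (Nat.card (Om G p k) * Nat.card ((Om G p (k+1)).map π)) := by
        ring
    _ = Nat.card (Om G p (k+1)) ^ 2 := by rw [← h1]; ring

private lemma isCyclic_of_small {p n : ℕ} (hp : p.Prime) (hG : Nat.card G = p ^ n)
    (h1 : Nat.card (Om G p 1) ≤ p) : IsCyclic G := by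
  classical
  have := Fintype.ofFinite G
  have hk : ∀ k, Nat.card (Om G p k) ≤ p ^ k := by
    intro k
    induction k with
    | zero => simp [Om_zero]
    | succ k ih =>
        rw [card_Om_succ p k, pow_succ]
        have h2 : Nat.card ((Om G p k) ⊓ (powMonoidHom p : G →* G).range : Subgroup G)
            ≤ Nat.card (Om G p k) := Subgroup.card_le_of_le inf_le_left
        calc Nat.card (Om G p 1) *
              Nat.card ((Om G p k) ⊓ (powMonoidHom p : G →* G).range : Subgroup G)
            ≤ p * p ^ k := Nat.mul_le_mul h1 (le_trans h2 ih)
          _ = p ^ k * p := by ring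
  apply isCyclic_of_card_pow_eq_one_le
  intro m hm
  obtain ⟨j, hjn, hj⟩ := (Nat.dvd_prime_pow hp).mp (Nat.gcd_dvd_left (p ^ n) m)
  have hsub : ({a : G | a ^ m = 1} : Finset G) ⊆ ({a : G | a ∈ Om G p j} : Finset G) := by
    intro a ha
    simp only [Finset.mem_filter] at ha ⊢
    refine ⟨Finset.mem_univ _, ?_⟩
    rw [mem_Om, ← hj]
    rw [← orderOf_dvd_iff_pow_eq_one] at ha ⊢
    exact Nat.dvd_gcd (by rw [orderOf_dvd_iff_pow_eq_one, ← hG]; exact pow_card_eq_one') ha.2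
  calc (({a : G | a ^ m = 1} : Finset G)).card ≤ ({a : G | a ∈ Om G p j} : Finset G).card :=
        Finset.card_le_card hsub
    _ = Nat.card (Om G p j) := by
        rw [Nat.card_eq_fintype_card]
        simp [Fintype.card_subtype]
    _ ≤ p ^ j := hk j
    _ ≤ m := by rw [← hj]; exact Nat.le_of_dvd hm (Nat.gcd_dvd_right _ _)

private def Vset (G : Type*) [CommGroup G] (p k : ℕ) : Set G :=
  (((Om G p (k+1) : Set G)) \ (Om G p k : Set G)) \
    (((powMonoidHom p : G →* G).range : Subgroup G) : Set G)

private lemma Vset_card (p k : ℕ) :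
    (Vset G p k).ncard
      + Nat.card ((Om G p (k+1)) ⊓ (powMonoidHom p : G →* G).range : Subgroup G)
      + Nat.card (Om G p k)
    = Nat.card (Om G p (k+1))
      + Nat.card ((Om G p k) ⊓ (powMonoidHom p : G →* G).range : Subgroup G) := by
  set A : Set G := (Om G p (k+1) : Set G) with hA
  set B : Set G := (Om G p k : Set G) with hB
  set Rs : Set G := (((powMonoidHom p : G →* G).range : Subgroup G) : Set G) with hRs
  have hBA : B ⊆ A := by
    intro x hx
    have : x ∈ Om G p k := hx
    exact Om_le_succ p k this
  have hV : Vset G p k = (A \ B) \ ((A ∩ Rs) \ B) := by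
    rw [Vset]
    ext x
    simp only [Set.mem_diff, Set.mem_inter_iff]
    tauto
  have hsub1 : (A ∩ Rs) \ B ⊆ A \ B := by
    intro x hx; exact ⟨hx.1.1, hx.2⟩
  have e1 : (Vset G p k).ncard + ((A ∩ Rs) \ B).ncard = (A \ B).ncard := by
    rw [hV]; exact Set.ncard_diff_add_ncard_of_subset hsub1
  have e2 : (A \ B).ncard + B.ncard = A.ncard :=
    Set.ncard_diff_add_ncard_of_subset hBA
  have hsub2 : B ∩ Rs ⊆ A ∩ Rs := fun x hx => ⟨hBA hx.1, hx.2⟩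
  have e3 : ((A ∩ Rs) \ (B ∩ Rs)).ncard + (B ∩ Rs).ncard = (A ∩ Rs).ncard :=
    Set.ncard_diff_add_ncard_of_subset hsub2
  have hdiffeq : (A ∩ Rs) \ (B ∩ Rs) = (A ∩ Rs) \ B := by
    ext x; simp only [Set.mem_diff, Set.mem_inter_iff]; tauto
  have cA : Nat.card (Om G p (k+1)) = A.ncard := by
    rw [hA, ← Nat.card_coe_set_eq]; rfl
  have cB : Nat.card (Om G p k) = B.ncard := by
    rw [hB, ← Nat.card_coe_set_eq]; rfl
  have cAR : Nat.card ((Om G p (k+1)) ⊓ (powMonoidHom p : G →* G).range : Subgroup G)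
      = (A ∩ Rs).ncard := by
    rw [← Nat.card_coe_set_eq, hA, hRs, ← Subgroup.coe_inf]; rfl
  have cBR : Nat.card ((Om G p k) ⊓ (powMonoidHom p : G →* G).range : Subgroup G)
      = (B ∩ Rs).ncard := by
    rw [← Nat.card_coe_set_eq, hB, hRs, ← Subgroup.coe_inf]; rfl
  rw [cA, cB, cAR, cBR]
  rw [hdiffeq] at e3
  omega

private lemma isCyclic_zpowers (g : G) : IsCyclic (zpowers g) := by
  refine ⟨⟨⟨g, mem_zpowers g⟩, ?_⟩⟩
  rintro ⟨y, hy⟩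
  obtain ⟨m, rfl⟩ := mem_zpowers_iff.mp hy
  exact ⟨m, by ext; simp⟩

private lemma isMaximalCyclic_zpowers {p n : ℕ} (hp : p.Prime) (hG : Nat.card G = p ^ n)
    {g : G} (hg : g ∉ (powMonoidHom p : G →* G).range) : IsMaximalCyclic (zpowers g) := by
  refine ⟨_root_.isCyclic_zpowers g, ?_⟩
  intro K hK hle
  obtain ⟨h, hh⟩ := hK.exists_generator
  have hKz : K = zpowers (h : G) := by
    apply le_antisymm
    · intro x hx
      obtain ⟨m, hm⟩ := mem_zpowers_iff.mp (hh ⟨x, hx⟩)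
      exact mem_zpowers_iff.mpr ⟨m, by simpa using congrArg (Subtype.val) hm⟩
    · exact zpowers_le.mpr h.2
  have hgK : g ∈ zpowers (h : G) := hKz ▸ hle (mem_zpowers g)
  obtain ⟨m, hm⟩ := (Submonoid.mem_powers_iff _ _).mp
    ((isOfFinOrder_of_finite (h : G)).mem_powers_iff_mem_zpowers.mpr hgK)
  by_cases hpm : p ∣ m
  · obtain ⟨t, rfl⟩ := hpm
    exact absurd ⟨(h : G) ^ t, by rw [powMonoidHom_apply, ← pow_mul, mul_comm]; exact hm⟩ hg
  · obtain ⟨j, hjn, hj⟩ := (Nat.dvd_prime_pow hp).mp (hG ▸ orderOf_dvd_natCard (h : G))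
    have hcop : Nat.Coprime (orderOf (h : G)) m := by
      rw [hj]
      exact Nat.Coprime.pow_left _ ((Nat.Prime.coprime_iff_not_dvd hp).mpr hpm)
    have hord : orderOf g = orderOf (h : G) := by
      rw [← hm, orderOf_pow, Nat.Coprime.gcd_eq_one hcop, Nat.div_one]
    rw [hKz]
    apply Subgroup.eq_of_le_of_card_ge (hKz ▸ hle)
    rw [Nat.card_zpowers, Nat.card_zpowers, hord]

private lemma ord_of_Vset {p k : ℕ} (hp : p.Prime) {g : G}
    (h1 : g ∈ Om G p (k+1)) (h2 : g ∉ Om G p k) : orderOf g = p ^ (k+1) := by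
  have hd : orderOf g ∣ p ^ (k+1) := orderOf_dvd_iff_pow_eq_one.mpr (mem_Om.mp h1)
  obtain ⟨j, hj, e⟩ := (Nat.dvd_prime_pow hp).mp hd
  rcases Nat.lt_or_ge j (k+1) with hlt | hge
  · exfalso
    apply h2
    rw [mem_Om]
    apply orderOf_dvd_iff_pow_eq_one.mp
    rw [e]
    exact pow_dvd_pow p (by omega)
  · rw [e]
    congr 1
    omega

private lemma ncard_orderOf_in_cyclic (H : Subgroup G) (hH : IsCyclic H) {d : ℕ}
    (hd : d ∣ Nat.card H) :
    ({g : G | g ∈ H ∧ orderOf g = d}).ncard ≤ Nat.totient d := by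
  classical
  have : Fintype H := Fintype.ofFinite H
  have himg : {g : G | g ∈ H ∧ orderOf g = d} = Subtype.val '' {a : H | orderOf a = d} := by
    ext g
    constructor
    · rintro ⟨hgH, hord⟩
      exact ⟨⟨g, hgH⟩, by rwa [Set.mem_setOf_eq, Subgroup.orderOf_mk], rfl⟩
    · rintro ⟨a, ha, rfl⟩
      exact ⟨a.2, by rwa [Subgroup.orderOf_coe]⟩
  rw [himg, Set.ncard_image_of_injective _ Subtype.val_injective]
  rw [Set.ncard_eq_toFinset_card', Set.toFinset_setOf]
  rw [Nat.card_eq_fintype_card] at hd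
  have := hH.card_orderOf_eq_totient (d := d) hd
  rw [← this]

end GroupLemmas

private lemma ncard_le_mul_ncard_of_maps_to {α β : Type*} {s : Set α} {t : Set β} {f : α → β}
    (hs : s.Finite) (ht : t.Finite) (hmaps : ∀ a ∈ s, f a ∈ t) (m : ℕ)
    (hfib : ∀ b ∈ t, (s ∩ f ⁻¹' {b}).ncard ≤ m) : s.ncard ≤ m * t.ncard := by
  classical
  rw [Set.ncard_eq_toFinset_card s hs, Set.ncard_eq_toFinset_card t ht]
  apply Finset.card_le_mul_card_image_of_maps_to (f := f)
    (fun a ha => by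
      rw [Set.Finite.mem_toFinset] at ha ⊢
      exact hmaps a ha)
  intro b hb
  rw [Set.Finite.mem_toFinset] at hb
  have hfin : (s ∩ f ⁻¹' {b}).Finite := hs.subset Set.inter_subset_left
  have heq : (hs.toFinset.filter (fun a => f a = b)) = hfin.toFinset := by
    ext a
    simp [Set.Finite.mem_toFinset]
  rw [heq, ← Set.ncard_eq_toFinset_card _ hfin]
  exact hfib b hb

theorem stmt7 {G : Type*} [CommGroup G] [Finite G] {p n : ℕ} (hp : p.Prime)
    (hodd : Odd p) (hG : Nat.card G = p ^ n) (hnc : ¬ IsCyclic G) :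
    (({H : Subgroup G | IsMaximalCyclic H}.ncard : ℝ)) ≥ ((p : ℝ) + 1) / 2 * n := by
  classical
  have hp2 : 2 ≤ p := hp.two_le
  have hp3 : 3 ≤ p := by
    rcases Nat.lt_or_ge p 3 with h | h
    · exfalso
      have : p = 2 := by omega
      rw [this] at hodd
      exact (Nat.not_odd_iff_even.mpr (by decide)) hodd
    · exact h
  have hn1 : 1 ≤ n := by
    by_contra h
    have hn0 : n = 0 := by omega
    subst hn0
    rw [pow_zero] at hG
    have : Subsingleton G := (Nat.card_eq_one_iff_unique.mp hG).1
    exact hnc isCyclic_of_subsingleton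
  have hdvd : ∀ k : ℕ, ∃ j, j ≤ n ∧ Nat.card (Om G p k) = p ^ j := fun k =>
    (Nat.dvd_prime_pow hp).mp (hG ▸ Subgroup.card_subgroup_dvd_card _)
  choose S hSle hS using hdvd
  have hpinj : ∀ {i j : ℕ}, p ^ i = p ^ j → i = j := fun h =>
    Nat.pow_right_injective hp2 h
  have hS0 : S 0 = 0 := hpinj (by rw [← hS 0, Om_zero, Subgroup.card_bot, pow_zero])
  have hSn : S n = n := hpinj (by rw [← hS n, Om_top hG, Subgroup.card_top, hG])
  have hOmn1 : Om G p (n+1) = ⊤ := by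
    rw [eq_top_iff, ← Om_top hG]
    exact Om_le_succ p n
  have hSn1 : S (n+1) = n := hpinj (by rw [← hS (n+1), hOmn1, Subgroup.card_top, hG])
  have hmono : ∀ k, S k ≤ S (k+1) := by
    intro k
    apply (Nat.pow_le_pow_iff_right hp2).mp
    rw [← hS k, ← hS (k+1)]
    exact Subgroup.card_le_of_le (Om_le_succ p k)
  have hconc : ∀ k, S (k+2) + S k ≤ 2 * S (k+1) := by
    intro k
    have h := card_Om_concave (G := G) p k
    rw [hS, hS, hS] at h
    apply (Nat.pow_le_pow_iff_right hp2).mp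
    rw [pow_add, two_mul, pow_add]
    calc p ^ S (k+2) * p ^ S k ≤ (p ^ S (k+1)) ^ 2 := h
      _ = p ^ S (k+1) * p ^ S (k+1) := sq (p ^ S (k+1))
  have hS1 : 2 ≤ S 1 := by
    by_contra h
    apply hnc
    apply isCyclic_of_small hp hG
    rw [hS 1]
    calc p ^ S 1 ≤ p ^ 1 := Nat.pow_le_pow_right (by omega) (by omega)
      _ = p := pow_one p
  set r : ℕ → ℕ := fun k =>
    Nat.card ((Om G p k) ⊓ (powMonoidHom p : G →* G).range : Subgroup G) with hrdef
  have hr : ∀ k, p ^ (S (k+1)) = p ^ (S 1) * r k := by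
    intro k
    rw [← hS (k+1), ← hS 1, hrdef]
    exact card_Om_succ p k
  set x : ℕ → ℕ := fun k => (Vset G p k).ncard with hxdef
  have hx : ∀ k, x k + r (k+1) + p ^ (S k) = p ^ (S (k+1)) + r k := by
    intro k
    rw [hxdef, hrdef]
    simp only []
    rw [← hS k, ← hS (k+1)]
    exact Vset_card p k
  have main := arith hp3 hn1 S x r hS0 hS1 hSn hSn1 hmono hconc hr hx
  -- counting step
  have hMk : ∀ k, (x k : ℝ) / ((p:ℝ) ^ k * ((p:ℝ) - 1)) ≤
      (({H : Subgroup G | IsMaximalCyclic H ∧ Nat.card H = p ^ (k+1)}).ncard : ℝ) := by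
    intro k
    set Mk := {H : Subgroup G | IsMaximalCyclic H ∧ Nat.card H = p ^ (k+1)} with hMkdef
    have hcard : x k ≤ Nat.totient (p ^ (k+1)) * Mk.ncard := by
      apply ncard_le_mul_ncard_of_maps_to (Set.toFinite _) (Set.toFinite _)
        (f := fun g => zpowers g)
      · intro g hg
        obtain ⟨⟨hg1, hg2⟩, hg3⟩ := hg
        have hg3' : g ∉ (powMonoidHom p : G →* G).range := hg3
        have hord : orderOf g = p ^ (k+1) := ord_of_Vset hp hg1 hg2
        exact ⟨isMaximalCyclic_zpowers hp hG hg3', by rw [Nat.card_zpowers, hord]⟩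
      · intro H hH
        have hsub : Vset G p k ∩ (fun g => zpowers g) ⁻¹' {H}
            ⊆ {g : G | g ∈ H ∧ orderOf g = p ^ (k+1)} := by
          rintro g ⟨⟨⟨hg1, hg2⟩, hg3⟩, hgH⟩
          simp only [Set.mem_preimage, Set.mem_singleton_iff] at hgH
          exact ⟨hgH ▸ mem_zpowers g, ord_of_Vset hp hg1 hg2⟩
        calc (Vset G p k ∩ (fun g => zpowers g) ⁻¹' {H}).ncard
            ≤ ({g : G | g ∈ H ∧ orderOf g = p ^ (k+1)}).ncard :=
              Set.ncard_le_ncard hsub (Set.toFinite _)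
          _ ≤ Nat.totient (p ^ (k+1)) :=
              ncard_orderOf_in_cyclic H hH.1.1 (by rw [hH.2])
    have hpos : (0:ℝ) < (p:ℝ) ^ k * ((p:ℝ) - 1) := by
      apply mul_pos (pow_pos (by exact_mod_cast by omega) k)
      have : (2:ℝ) ≤ (p:ℝ) := by exact_mod_cast hp2
      linarith
    rw [div_le_iff₀ hpos]
    have htot : (Nat.totient (p ^ (k+1)) : ℝ) = (p:ℝ) ^ k * ((p:ℝ) - 1) := by
      rw [Nat.totient_prime_pow hp (Nat.succ_pos k)]
      push_cast [Nat.cast_sub (show 1 ≤ p by omega)]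
      simp
    have hcR : (x k : ℝ) ≤ (Nat.totient (p ^ (k+1)) : ℝ) * (Mk.ncard : ℝ) := by
      exact_mod_cast hcard
    rw [htot] at hcR
    linarith [hcR]
  have hsum2 : ∑ k ∈ Finset.range n,
      ((({H : Subgroup G | IsMaximalCyclic H ∧ Nat.card H = p ^ (k+1)}).ncard : ℝ))
      ≤ (({H : Subgroup G | IsMaximalCyclic H}).ncard : ℝ) := by
    rw [← Nat.cast_sum]
    apply Nat.cast_le.mpr
    have hfin : Fintype (Subgroup G) := Fintype.ofFinite _
    set T : ℕ → Finset (Subgroup G) := fun k =>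
      (Set.toFinite {H : Subgroup G | IsMaximalCyclic H ∧ Nat.card H = p ^ (k+1)}).toFinset
      with hT
    have hTcard : ∀ k, ({H : Subgroup G | IsMaximalCyclic H ∧ Nat.card H = p ^ (k+1)}).ncard
        = (T k).card := fun k => Set.ncard_eq_toFinset_card _ _
    have hdisj : ∀ k ∈ Finset.range n, ∀ l ∈ Finset.range n, k ≠ l →
        Disjoint (T k) (T l) := by
      intro k _ l _ hkl
      rw [Finset.disjoint_left]
      intro H hHk hHl
      rw [hT, Set.Finite.mem_toFinset] at hHk hHl
      exact hkl (Nat.succ_injective (hpinj (hHk.2.symm.trans hHl.2)))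
    calc ∑ k ∈ Finset.range n,
          ({H : Subgroup G | IsMaximalCyclic H ∧ Nat.card H = p ^ (k+1)}).ncard
        = ∑ k ∈ Finset.range n, (T k).card :=
          Finset.sum_congr rfl (fun k _ => hTcard k)
      _ = ((Finset.range n).biUnion T).card := (Finset.card_biUnion hdisj).symm
      _ ≤ (Set.toFinite {H : Subgroup G | IsMaximalCyclic H}).toFinset.card := by
          apply Finset.card_le_card
          intro H hH
          rw [Finset.mem_biUnion] at hH
          obtain ⟨k, _, hk⟩ := hH
          rw [hT, Set.Finite.mem_toFinset] at hk
          rw [Set.Finite.mem_toFinset]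
          exact hk.1
      _ = ({H : Subgroup G | IsMaximalCyclic H}).ncard :=
          (Set.ncard_eq_toFinset_card _ _).symm
  rw [ge_iff_le]
  calc ((p : ℝ) + 1) / 2 * n
      ≤ ∑ k ∈ Finset.range n, (x k : ℝ) / ((p:ℝ) ^ k * ((p:ℝ) - 1)) := main
    _ ≤ ∑ k ∈ Finset.range n,
        ((({H : Subgroup G | IsMaximalCyclic H ∧ Nat.card H = p ^ (k+1)}).ncard : ℝ)) :=
          Finset.sum_le_sum (fun k _ => hMk k)
    _ ≤ (({H : Subgroup G | IsMaximalCyclic H}).ncard : ℝ) := hsum2
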